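/- Let W be the family of all finite (discrete) intervals in ℤ, 1 < r' < ∞, 1/r + 1/r' = 1, and let λ = (λ_k)_{k∈ℤ} be a W-generalized monotone sequence with constant C, i.e. λ_n^* ≤ C · sup_{e∈W, |e|≥n} (1/|e|)|Σ_{j∈e} λ_j| for all n ∈ ℕ. Then for every finite subset e ⊂ ℤ (not necessarily an interval), |e|^{-1/r'} |Σ_{m∈e} λ_m| ≤ C'' · sup_{e'∈W} |e'|^{-1/r'} |Σ_{j∈e'} λ_j|, with C'' depending only on C and r. -/

import Mathlib

open MeasureTheory ENNReal

/-- Non-increasing rearrangement `a_n^* = inf {σ : #{j : |a_j| > σ} < n}` of a complex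
sequence on `ℤ` (valued in `ℝ≥0∞`), for `n ≥ 1`. -/
noncomputable def srearr (a : ℤ → ℂ) (n : ℕ) : ℝ≥0∞ :=
  sInf {σ : ℝ≥0∞ | Measure.count {j : ℤ | σ < ENNReal.ofReal ‖a j‖} < n}

/-- The family of all finite nonempty discrete intervals in `ℤ`. -/
def ZIntervals : Set (Finset ℤ) := {e | ∃ a b : ℤ, a ≤ b ∧ e = Finset.Icc a b}

lemma srearr_anti_bound (a : ℤ → ℂ) {N : ℕ} (m : Fin N → ℤ) (hm : Function.Injective m)
    (hanti : Antitone fun i => ‖a (m i)‖) (i : Fin N) :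
    ENNReal.ofReal ‖a (m i)‖ ≤ srearr a (i + 1) := by
  apply le_sInf
  intro σ hσ
  by_contra hlt
  push_neg at hlt
  have hcard : ((Finset.Iic i).image m).card = (i : ℕ) + 1 := by
    rw [Finset.card_image_of_injective _ hm, Fin.card_Iic]
  have hsub : (((Finset.Iic i).image m : Finset ℤ) : Set ℤ)
      ⊆ {j : ℤ | σ < ENNReal.ofReal ‖a j‖} := by
    intro j hj
    simp only [Finset.coe_image, Set.mem_image, Finset.mem_coe, Finset.mem_Iic] at hj
    obtain ⟨k, hk, rfl⟩ := hj
    exact lt_of_lt_of_le hlt (ENNReal.ofReal_le_ofReal (hanti hk))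
  have hge : ((i : ℕ) + 1 : ℝ≥0∞) ≤ Measure.count {j : ℤ | σ < ENNReal.ofReal ‖a j‖} := by
    calc ((i : ℕ) + 1 : ℝ≥0∞) = Measure.count (((Finset.Iic i).image m : Finset ℤ) : Set ℤ) := by
          rw [Measure.count_apply_finset, hcard]; push_cast; ring
      _ ≤ _ := measure_mono hsub
  exact absurd hσ (not_lt.2 (by exact_mod_cast hge))

lemma sum_le_sum_srearr (a : ℤ → ℂ) (e : Finset ℤ) :
    ∑ m ∈ e, ENNReal.ofReal ‖a m‖ ≤ ∑ i ∈ Finset.range e.card, srearr a (i + 1) := by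
  set N := e.card with hN
  let o : Fin N ≃o e := e.orderIsoOfFin hN.symm
  let g : Fin N → ℝ := fun i => ‖a (o i)‖
  let σ := Tuple.sort g
  let E : Fin N ≃ e := (Fin.revPerm.trans σ).trans o.toEquiv
  have hmono : Monotone (g ∘ σ) := Tuple.monotone_sort g
  have hanti : Antitone fun i : Fin N => ‖a ((E i : ℤ))‖ := by
    intro i j hij
    exact hmono (Fin.rev_le_rev.mpr hij)
  have hinj : Function.Injective fun i : Fin N => (E i : ℤ) :=
    Subtype.val_injective.comp E.injective
  have key : ∀ i : Fin N, ENNReal.ofReal ‖a ((E i : ℤ))‖ ≤ srearr a (i + 1) :=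
    srearr_anti_bound a _ hinj hanti
  calc ∑ m ∈ e, ENNReal.ofReal ‖a m‖
      = ∑ x : e, ENNReal.ofReal ‖a x‖ := (Finset.sum_coe_sort e _).symm
    _ = ∑ i : Fin N, ENNReal.ofReal ‖a ((E i : ℤ))‖ := (E.sum_comp _).symm
    _ ≤ ∑ i : Fin N, srearr a (i + 1) := Finset.sum_le_sum fun i _ => key i
    _ = ∑ i ∈ Finset.range N, srearr a (i + 1) :=
        Fin.sum_univ_eq_sum_range (fun n => srearr a (n + 1)) N

lemma aux_step {p : ℝ} (hp0 : 0 < p) (hp1 : p < 1) (i : ℕ) :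
    ((i + 1 : ℝ) ^ (1 - p))⁻¹ ≤ (1 / p) * ((i + 1 : ℝ) ^ p - (i : ℝ) ^ p) := by
  set n : ℝ := (i : ℝ) + 1 with hn
  have hn1 : 1 ≤ n := by simp [hn]
  have hn0 : 0 < n := by linarith
  have hi0 : (0:ℝ) ≤ (i:ℝ) := Nat.cast_nonneg i
  have hs : (-1 : ℝ) ≤ -1/n := by
    rw [neg_div]
    have : 1/n ≤ 1 := by rw [div_le_one hn0]; exact hn1
    linarith
  have hb : (1 + (-1/n)) ^ p ≤ 1 + p * (-1/n) :=
    rpow_one_add_le_one_add_mul_self hs hp0.le hp1.le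
  have h1 : 1 + (-1/n) = (i:ℝ)/n := by field_simp [hn]; linarith
  rw [h1, Real.div_rpow hi0 hn0.le] at hb
  have hnp : (0:ℝ) < n ^ p := Real.rpow_pos_of_pos hn0 p
  have hpow : n ^ p / n = n ^ (p - 1) := by
    rw [Real.rpow_sub hn0, Real.rpow_one]
  have hinv : (n ^ (1 - p))⁻¹ = n ^ (p - 1) := by
    rw [← Real.rpow_neg hn0.le, neg_sub]
  have hkey : (i:ℝ)^p ≤ n ^ p - p * n ^ (p - 1) := by
    have h2 : (i:ℝ)^p ≤ n^p * (1 + p * (-1/n)) := by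
      rw [← div_le_iff₀' hnp] at *
      linarith [hb]
    have h3 : n^p * (1 + p * (-1/n)) = n^p - p * (n^p / n) := by ring
    rw [h3, hpow] at h2
    exact h2
  rw [hinv]
  rw [← sub_nonneg]
  have : 1/p * (n ^ p - (i:ℝ)^p) - n^(p-1) = (1/p) * ((n^p - p * n^(p-1)) - (i:ℝ)^p) := by
    field_simp
    ring
  rw [this]
  have := sub_nonneg.mpr hkey
  positivity

lemma sum_rpow_inv_le {p : ℝ} (hp0 : 0 < p) (hp1 : p < 1) (N : ℕ) :
    ∑ i ∈ Finset.range N, ((i + 1 : ℝ) ^ (1 - p))⁻¹ ≤ (1 / p) * (N : ℝ) ^ p := by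
  calc ∑ i ∈ Finset.range N, ((i + 1 : ℝ) ^ (1 - p))⁻¹
      ≤ ∑ i ∈ Finset.range N, (1/p) * ((i + 1 : ℝ) ^ p - (i : ℝ) ^ p) :=
        Finset.sum_le_sum fun i _ => aux_step hp0 hp1 i
    _ = (1/p) * ∑ i ∈ Finset.range N, (((i+1 : ℕ) : ℝ) ^ p - ((i : ℕ) : ℝ) ^ p) := by
        rw [← Finset.mul_sum]; push_cast; ring_nf
    _ = (1/p) * (((N:ℝ)) ^ p - ((0:ℕ):ℝ) ^ p) := by
        rw [Finset.sum_range_sub (fun n => ((n:ℕ):ℝ) ^ p)]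
    _ = (1/p) * (N : ℝ) ^ p := by
        norm_num [Real.zero_rpow (ne_of_gt hp0)]

/-- if `λ` is a `W`-generalized monotone sequence, then for every finite
set `e ⊂ ℤ` (not necessarily an interval), `|e|^{-1/r'} |Σ_{m∈e} λ_m|` is controlled by
`sup_{e'∈W} |e'|^{-1/r'} |Σ_{j∈e'} λ_j|`, with a constant depending only on `C` and `r`. -/
theorem gen_monotone_seq (r r' : ℝ) (hr' : 1 < r') (hrr' : 1 / r + 1 / r' = 1)
    (lam : ℤ → ℂ) (C : ℝ) (hC : 0 < C)
    (hmono : ∀ n : ℕ, 1 ≤ n → srearr lam n ≤ ENNReal.ofReal C *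
      ⨆ (e : Finset ℤ) (_ : e ∈ ZIntervals) (_ : n ≤ e.card),
        ENNReal.ofReal ‖∑ j ∈ e, lam j‖ / (e.card : ℝ≥0∞)) :
    ∃ C'' : ℝ, 0 < C'' ∧
      ∀ e : Finset ℤ, e.Nonempty →
        ENNReal.ofReal ‖∑ m ∈ e, lam m‖ / (e.card : ℝ≥0∞) ^ (1 / r') ≤
          ENNReal.ofReal C'' *
            ⨆ (e' : Finset ℤ) (_ : e' ∈ ZIntervals),
              ENNReal.ofReal ‖∑ j ∈ e', lam j‖ / (e'.card : ℝ≥0∞) ^ (1 / r') := by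
  have hr'0 : 0 < r' := lt_trans one_pos hr'
  set p := 1 / r' with hp
  have hp0 : 0 < p := by positivity
  have hp1 : p < 1 := by rw [hp, div_lt_one hr'0]; exact hr'
  refine ⟨C * (1/p), by positivity, fun e he => ?_⟩
  set S : ℝ≥0∞ := ⨆ (e' : Finset ℤ) (_ : e' ∈ ZIntervals),
      ENNReal.ofReal ‖∑ j ∈ e', lam j‖ / (e'.card : ℝ≥0∞) ^ p with hS
  -- Claim A: the averaged sup over long intervals is bounded by `S * n^{-(1-p)}`.
  have claimA : ∀ n : ℕ, 1 ≤ n →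
      (⨆ (e'' : Finset ℤ) (_ : e'' ∈ ZIntervals) (_ : n ≤ e''.card),
        ENNReal.ofReal ‖∑ j ∈ e'', lam j‖ / (e''.card : ℝ≥0∞)) ≤
        S * (((n:ℝ≥0∞)) ^ (1-p))⁻¹ := by
    intro n hn
    refine iSup_le fun e' => iSup_le fun he' => iSup_le fun hcard => ?_
    have hc1 : 1 ≤ e'.card := le_trans hn hcard
    have hne0 : (e'.card : ℝ≥0∞) ≠ 0 := by exact_mod_cast Nat.one_le_iff_ne_zero.mp hc1
    have hnetop : (e'.card : ℝ≥0∞) ≠ ⊤ := natCast_ne_top _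
    have hsplit : (e'.card : ℝ≥0∞) = (e'.card : ℝ≥0∞) ^ p * (e'.card : ℝ≥0∞) ^ (1-p) := by
      rw [← ENNReal.rpow_add _ _ hne0 hnetop]; norm_num
    have hpos : (0:ℝ≥0∞) < (e'.card : ℝ≥0∞) := pos_iff_ne_zero.mpr hne0
    have hap0 : ((e'.card : ℝ≥0∞)) ^ p ≠ 0 := (ENNReal.rpow_pos hpos hnetop).ne'
    have haptop : ((e'.card : ℝ≥0∞)) ^ p ≠ ⊤ :=
      (ENNReal.rpow_lt_top_of_nonneg hp0.le hnetop).ne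
    have hinv : ((e'.card : ℝ≥0∞))⁻¹ =
        (((e'.card : ℝ≥0∞)) ^ p)⁻¹ * (((e'.card : ℝ≥0∞)) ^ (1-p))⁻¹ := by
      conv_lhs => rw [hsplit]
      exact ENNReal.mul_inv (Or.inl hap0) (Or.inl haptop)
    calc ENNReal.ofReal ‖∑ j ∈ e', lam j‖ / (e'.card : ℝ≥0∞)
        = (ENNReal.ofReal ‖∑ j ∈ e', lam j‖ / (e'.card : ℝ≥0∞) ^ p) *
            (((e'.card : ℝ≥0∞)) ^ (1-p))⁻¹ := by
          rw [div_eq_mul_inv, div_eq_mul_inv, hinv, mul_assoc]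
      _ ≤ S * (((n:ℝ≥0∞)) ^ (1-p))⁻¹ := by
          refine mul_le_mul' ?_ ?_
          · exact le_iSup₂ (f := fun (e'' : Finset ℤ) (_ : e'' ∈ ZIntervals) =>
              ENNReal.ofReal ‖∑ j ∈ e'', lam j‖ / (e''.card : ℝ≥0∞) ^ p) e' he'
          · refine ENNReal.inv_le_inv.mpr (ENNReal.rpow_le_rpow ?_ (by linarith))
            exact_mod_cast hcard
  set N := e.card with hN
  have hN1 : 1 ≤ N := Finset.card_pos.mpr he
  have hNne0 : (N:ℝ≥0∞) ≠ 0 := by exact_mod_cast Nat.one_le_iff_ne_zero.mp hN1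
  have hNnetop : (N:ℝ≥0∞) ≠ ⊤ := natCast_ne_top _
  have hNp0 : ((N:ℝ≥0∞)) ^ p ≠ 0 :=
    (ENNReal.rpow_pos (pos_iff_ne_zero.mpr hNne0) hNnetop).ne'
  have hNptop : ((N:ℝ≥0∞)) ^ p ≠ ⊤ := (ENNReal.rpow_lt_top_of_nonneg hp0.le hNnetop).ne
  -- Claim B: partial sums of `n^{-(1-p)}` grow like `N^p`.
  have claimB : ∑ i ∈ Finset.range N, ((((i:ℝ≥0∞)+1)) ^ (1-p))⁻¹ ≤
      ENNReal.ofReal (1/p) * ((N:ℝ≥0∞)) ^ p := by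
    have hterm : ∀ i : ℕ, ((((i:ℝ≥0∞)+1)) ^ (1-p))⁻¹ =
        ENNReal.ofReal ((((i:ℝ)+1)) ^ (1-p))⁻¹ := by
      intro i
      have h1 : (0:ℝ) < (i:ℝ)+1 := by positivity
      have hcast : ((i:ℝ≥0∞)+1) = ENNReal.ofReal ((i:ℝ)+1) := by
        rw [ENNReal.ofReal_add (by positivity) zero_le_one]
        simp
      rw [hcast, ENNReal.ofReal_rpow_of_pos h1,
        ← ENNReal.ofReal_inv_of_pos (Real.rpow_pos_of_pos h1 _)]
    calc ∑ i ∈ Finset.range N, ((((i:ℝ≥0∞)+1)) ^ (1-p))⁻¹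
        = ENNReal.ofReal (∑ i ∈ Finset.range N, ((((i:ℝ)+1)) ^ (1-p))⁻¹) := by
          rw [ENNReal.ofReal_sum_of_nonneg (fun i _ => by positivity)]
          exact Finset.sum_congr rfl fun i _ => hterm i
      _ ≤ ENNReal.ofReal ((1/p) * (N:ℝ) ^ p) :=
          ENNReal.ofReal_le_ofReal (sum_rpow_inv_le hp0 hp1 N)
      _ = ENNReal.ofReal (1/p) * ((N:ℝ≥0∞)) ^ p := by
          have hNpos : (0:ℝ) < (N:ℝ) := by exact_mod_cast hN1
          rw [ENNReal.ofReal_mul (by positivity),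
            ← ENNReal.ofReal_rpow_of_pos hNpos, ENNReal.ofReal_natCast]
  rw [ENNReal.div_le_iff hNp0 hNptop]
  calc ENNReal.ofReal ‖∑ m ∈ e, lam m‖
      ≤ ∑ m ∈ e, ENNReal.ofReal ‖lam m‖ := by
        rw [← ENNReal.ofReal_sum_of_nonneg (fun _ _ => norm_nonneg _)]
        exact ENNReal.ofReal_le_ofReal (norm_sum_le _ _)
    _ ≤ ∑ i ∈ Finset.range N, srearr lam (i+1) := sum_le_sum_srearr lam e
    _ ≤ ∑ i ∈ Finset.range N,
          (ENNReal.ofReal C * S) * ((((i:ℝ≥0∞)+1)) ^ (1-p))⁻¹ := by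
        refine Finset.sum_le_sum fun i _ => ?_
        refine (hmono (i+1) (by omega)).trans ?_
        have := claimA (i+1) (by omega)
        calc ENNReal.ofReal C *
            (⨆ (e'' : Finset ℤ) (_ : e'' ∈ ZIntervals) (_ : i+1 ≤ e''.card),
              ENNReal.ofReal ‖∑ j ∈ e'', lam j‖ / (e''.card : ℝ≥0∞))
            ≤ ENNReal.ofReal C * (S * ((((i+1:ℕ):ℝ≥0∞)) ^ (1-p))⁻¹) :=
              mul_le_mul_right this _
          _ = (ENNReal.ofReal C * S) * ((((i:ℝ≥0∞)+1)) ^ (1-p))⁻¹ := by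
              rw [← mul_assoc]
              congr 3
              push_cast
              ring
    _ = (ENNReal.ofReal C * S) * ∑ i ∈ Finset.range N, ((((i:ℝ≥0∞)+1)) ^ (1-p))⁻¹ := by
        rw [← Finset.mul_sum]
    _ ≤ (ENNReal.ofReal C * S) * (ENNReal.ofReal (1/p) * ((N:ℝ≥0∞)) ^ p) :=
        mul_le_mul_right claimB _
    _ = ENNReal.ofReal (C * (1/p)) * S * ((N:ℝ≥0∞)) ^ p := by
        rw [ENNReal.ofReal_mul hC.le]
        ring
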